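/- No overflow for the scalar innovation encoder (deterministic form): fix T ≥ 2, m ≥ 1, γ ∈ (0,1), and let f_k = 2√(log T / k), p_1 = m + f_1, p_{k+1} = γ p_k + 2 f_k for k ≥ 1. Let θ ∈ ℝ with |θ| ≤ m, let â_1, …, â_T ∈ ℝ satisfy |â_k − θ| ≤ f_k for all k ∈ [T], let ŝ_0 = 0, and define e_k = â_k − ŝ_{k−1} and ŝ_k = ŝ_{k−1} + ẽ_k, where ẽ_k is any real number satisfying |ẽ_k − e_k| ≤ γ p_k whenever |e_k| ≤ p_k. Then |e_k| ≤ p_k for every k ∈ [T]. -/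

import Mathlib

/-- **No overflow for the scalar innovation encoder (deterministic form).**
With `f_k = 2√(log T / k)`, `p_1 = m + f_1`, `p_{k+1} = γ p_k + 2 f_k`, estimates `â_k`
within `f_k` of `θ`, server iterates `ŝ_k = ŝ_{k−1} + ẽ_k` where `|ẽ_k − e_k| ≤ γ p_k`
whenever `|e_k| ≤ p_k`, and innovations `e_k = â_k − ŝ_{k−1}`, every innovation satisfies
`|e_k| ≤ p_k` for `k ∈ [T]`. -/
theorem stmt_16
    (T : ℕ) (hT : 2 ≤ T) (m γ : ℝ) (hm : 1 ≤ m) (hγ0 : 0 < γ) (hγ1 : γ < 1)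
    (f p : ℕ → ℝ)
    (hf : ∀ k, 1 ≤ k → f k = 2 * Real.sqrt (Real.log T / k))
    (hp1 : p 1 = m + f 1)
    (hp : ∀ k, 1 ≤ k → p (k + 1) = γ * p k + 2 * f k)
    (θ : ℝ) (hθ : |θ| ≤ m)
    (ahat : ℕ → ℝ) (hahat : ∀ k ∈ Finset.Icc 1 T, |ahat k - θ| ≤ f k)
    (shat : ℕ → ℝ) (hs0 : shat 0 = 0)
    (e : ℕ → ℝ) (he : ∀ k, 1 ≤ k → e k = ahat k - shat (k - 1))
    (etil : ℕ → ℝ)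
    (hetil : ∀ k ∈ Finset.Icc 1 T, |e k| ≤ p k → |etil k - e k| ≤ γ * p k)
    (hsrec : ∀ k, 1 ≤ k → shat k = shat (k - 1) + etil k) :
    ∀ k ∈ Finset.Icc 1 T, |e k| ≤ p k := by
  have hfmono : ∀ k : ℕ, 1 ≤ k → f (k + 1) ≤ f k := by
    intro k hk
    rw [hf _ hk, hf _ (le_trans hk (Nat.le_succ k))]
    have hlog : (0:ℝ) ≤ Real.log T := by
      apply Real.log_nonneg
      exact_mod_cast le_trans (by norm_num) hT
    have : Real.log T / (k+1:ℕ) ≤ Real.log T / k := by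
      apply div_le_div_of_nonneg_left hlog
      · exact_mod_cast hk
      · push_cast; linarith
    have := Real.sqrt_le_sqrt this
    linarith
  have key : ∀ k : ℕ, 1 ≤ k → k ≤ T → |e k| ≤ p k := by
    intro k
    induction k with
    | zero => intro h; omega
    | succ n ih =>
      intro _ hkT
      rcases Nat.eq_zero_or_pos n with hn | hn
      · subst hn
        have h1 : e 1 = ahat 1 := by rw [he 1 le_rfl]; norm_num [hs0]
        rw [h1, hp1]
        have := hahat 1 (Finset.mem_Icc.mpr ⟨le_refl _, hkT⟩)
        calc |ahat 1| = |(ahat 1 - θ) + θ| := by ring_nf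
          _ ≤ |ahat 1 - θ| + |θ| := abs_add_le _ _
          _ ≤ f 1 + m := add_le_add this hθ
          _ = m + f 1 := by ring
      · have hn1 : 1 ≤ n := hn
        have hnT : n ≤ T := le_trans (Nat.le_succ n) hkT
        have hen : |e n| ≤ p n := ih hn1 hnT
        have hq := hetil n (Finset.mem_Icc.mpr ⟨hn1, hnT⟩) hen
        have hsn := hsrec n hn1
        have hek : e (n+1) = (ahat (n+1) - θ) - (ahat n - θ) + (e n - etil n) := by
          rw [he (n+1) (by omega)]
          simp only [Nat.add_sub_cancel]
          rw [hsn, he n hn1]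
          ring
        have ha1 := hahat (n+1) (Finset.mem_Icc.mpr ⟨by omega, hkT⟩)
        have ha2 := hahat n (Finset.mem_Icc.mpr ⟨hn1, hnT⟩)
        have habs : |e (n+1)| ≤ f (n+1) + f n + γ * p n := by
          rw [hek]
          calc |(ahat (n+1) - θ) - (ahat n - θ) + (e n - etil n)|
              ≤ |(ahat (n+1) - θ) - (ahat n - θ)| + |e n - etil n| := abs_add_le _ _
            _ ≤ (|ahat (n+1) - θ| + |ahat n - θ|) + |etil n - e n| := by
                rw [abs_sub_comm (e n)]
                exact add_le_add_left (abs_sub _ _) _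
            _ ≤ f (n+1) + f n + γ * p n := by
                exact add_le_add (add_le_add ha1 ha2) hq
        rw [hp n hn1]
        have := hfmono n hn1
        linarith
  intro k hk
  rw [Finset.mem_Icc] at hk
  exact key k hk.1 hk.2
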